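/- Small-increment property of càdlàg functions: Let T > 0 and let x : [0,∞) → ℝ be càdlàg. For every ε > 0 there exists N ∈ ℕ such that for all n ≥ N and all i ∈ {1,…,⌊nT⌋}: if |Δx_s| ≤ ε for every s ∈ ((i−1)/n, i/n], then |x(i/n) − x((i−1)/n)| < 2ε. -/
import Mathlib


open Filter Topology

/-- **Small-increment property of càdlàg functions**: if `x` has no jump of size `> ε` on
`((i−1)/n, i/n]`, then for `n` large (uniformly in `i ≤ ⌊nT⌋`) the increment of `x` over
this interval is smaller than `2ε`. Here `xm` is the left-limit function of `x`, so that
the jump of `x` at `s` is `x s − xm s`. -/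
theorem stmt2 (T : ℝ) (hT : 0 < T) (x xm : ℝ → ℝ)
    (hx_rc : ∀ s : ℝ, 0 ≤ s → ContinuousWithinAt x (Set.Ici s) s)
    (hx_ll : ∀ s : ℝ, 0 < s → Filter.Tendsto x (nhdsWithin s (Set.Iio s)) (nhds (xm s)))
    (ε : ℝ) (hε : 0 < ε) :
    ∃ N : ℕ, ∀ n : ℕ, N ≤ n → ∀ i : ℕ, 1 ≤ i → i ≤ Nat.floor ((n : ℝ) * T) →
      (∀ s ∈ Set.Ioc (((i : ℝ) - 1) / n) ((i : ℝ) / n), |x s - xm s| ≤ ε) →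
      |x ((i : ℝ) / n) - x (((i : ℝ) - 1) / n)| < 2 * ε := by
  have hε2 : 0 < ε / 2 := by positivity
  have key : ∀ t : ℝ, t ∈ Set.Icc 0 T → ∃ δ1 > 0, ∃ δ2 > 0,
      (∀ s, t ≤ s → s < t + δ1 → |x s - x t| < ε / 2) ∧
      (∀ s, t - δ2 < s → s < t → 0 ≤ s → |x s - xm t| < ε / 2) := by
    intro t ht
    obtain ⟨δ1, hδ1, h1⟩ := Metric.tendsto_nhdsWithin_nhds.mp (hx_rc t ht.1) (ε / 2) hε2
    have hR : ∀ s, t ≤ s → s < t + δ1 → |x s - x t| < ε / 2 := by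
      intro s hs1 hs2
      have := h1 (Set.mem_Ici.mpr hs1)
        (by rw [Real.dist_eq, abs_of_nonneg (by linarith)]; linarith)
      rwa [Real.dist_eq] at this
    rcases lt_or_ge 0 t with htpos | htle
    · obtain ⟨δ2, hδ2, h2⟩ := Metric.tendsto_nhdsWithin_nhds.mp (hx_ll t htpos) (ε / 2) hε2
      refine ⟨δ1, hδ1, δ2, hδ2, hR, ?_⟩
      intro s hs1 hs2 _
      have := h2 (Set.mem_Iio.mpr hs2)
        (by rw [Real.dist_eq, abs_of_nonpos (by linarith)]; linarith)
      rwa [Real.dist_eq] at this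
    · exact ⟨δ1, hδ1, 1, one_pos, hR, fun s hs1 hs2 hs3 => absurd (lt_of_lt_of_le hs2 htle)
        (not_lt.mpr hs3)⟩
  choose! δ1 hδ1 δ2 hδ2 hR hL using key
  set c : ↥(Set.Icc (0:ℝ) T) → Set ℝ :=
    fun t => Set.Ioo ((t : ℝ) - δ2 t) ((t : ℝ) + δ1 t) with hc
  have hcov : Set.Icc (0:ℝ) T ⊆ ⋃ t, c t := by
    intro y hy
    exact Set.mem_iUnion.mpr ⟨⟨y, hy⟩, by
      simp only [hc]
      exact ⟨by linarith [hδ2 y hy], by linarith [hδ1 y hy]⟩⟩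
  obtain ⟨δ, hδpos, hleb⟩ := lebesgue_number_lemma_of_metric isCompact_Icc
    (fun t => isOpen_Ioo) hcov
  refine ⟨⌈1 / δ⌉₊ + 1, ?_⟩
  intro n hn i hi1 hi2 hjump
  have hn1 : 1 ≤ n := le_trans (Nat.le_add_left 1 _) hn
  have hnpos : (0:ℝ) < n := by exact_mod_cast hn1
  set a : ℝ := ((i : ℝ) - 1) / n with hadef
  set b : ℝ := (i : ℝ) / n with hbdef
  have hi1' : (1:ℝ) ≤ i := by exact_mod_cast hi1
  have ha0 : 0 ≤ a := div_nonneg (by linarith) hnpos.le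
  have hba : b - a = 1 / n := by
    rw [hadef, hbdef, div_sub_div_same]; ring_nf
  have h1n : 1 / (n:ℝ) < δ := by
    have hcast : ((⌈1 / δ⌉₊ + 1 : ℕ) : ℝ) ≤ n := by exact_mod_cast hn
    have h2 : 1 / δ < (n : ℝ) := by
      have := Nat.le_ceil (1 / δ)
      push_cast at hcast
      linarith
    rw [div_lt_iff₀ hnpos]
    rw [div_lt_iff₀ hδpos] at h2
    linarith
  have hab : a < b := by
    have : (0:ℝ) < 1 / n := by positivity
    linarith
  have hbT : b ≤ T := by
    have h1 : (i : ℝ) ≤ (Nat.floor ((n : ℝ) * T) : ℝ) := by exact_mod_cast hi2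
    have h2 : (Nat.floor ((n : ℝ) * T) : ℝ) ≤ (n : ℝ) * T :=
      Nat.floor_le (by positivity)
    rw [hbdef, div_le_iff₀ hnpos]
    linarith
  have hb0 : 0 ≤ b := by positivity
  obtain ⟨t, ht⟩ := hleb b ⟨hb0, hbT⟩
  have hat : a ∈ c t := ht (by
    rw [Metric.mem_ball, Real.dist_eq, abs_of_nonpos (by linarith)]
    linarith)
  have hbt : b ∈ c t := ht (Metric.mem_ball_self hδpos)
  simp only [hc, Set.mem_Ioo] at hat hbt
  have ht2 := t.2
  rcases le_or_gt (t : ℝ) a with h1 | h1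
  · have hxa := hR t ht2 a h1 (by linarith [hat.2])
    have hxb := hR t ht2 b (le_trans h1 hab.le) (by linarith [hbt.2])
    calc |x b - x a| ≤ |x b - x (t : ℝ)| + |x (t : ℝ) - x a| := abs_sub_le _ _ _
      _ < 2 * ε := by rw [abs_sub_comm (x (t : ℝ))]; linarith
  · rcases lt_or_ge b (t : ℝ) with h2 | h2
    · have hxa := hL t ht2 a hat.1 h1 ha0
      have hxb := hL t ht2 b hbt.1 h2 hb0
      calc |x b - x a| ≤ |x b - xm (t : ℝ)| + |xm (t : ℝ) - x a| := abs_sub_le _ _ _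
        _ < 2 * ε := by rw [abs_sub_comm (xm (t : ℝ))]; linarith
    · have hjt := hjump (t : ℝ) ⟨h1, h2⟩
      have hxb := hR t ht2 b h2 (by linarith [hbt.2])
      have hxa := hL t ht2 a hat.1 h1 ha0
      calc |x b - x a| ≤ |x b - x (t : ℝ)| + |x (t : ℝ) - x a| := abs_sub_le _ _ _
        _ ≤ |x b - x (t : ℝ)| + (|x (t : ℝ) - xm (t : ℝ)| + |xm (t : ℝ) - x a|) := by
            gcongr
            exact abs_sub_le _ _ _
        _ < 2 * ε := by rw [abs_sub_comm (xm (t : ℝ))]; linarith
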